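/- Let μ and ν be finite Borel measures on [0, T], β, δ > 0, and suppose there exist D > 0 and q > 0 such that for all n ∈ ℕ, E[ μ({ t ∈ [0,T] : ν([t, min(t + 2^{-n}, T)]) < 2^{β+δ} (2^{-n})^{β+δ} }) ] ≤ D 2^{-n q/2} · 2^{-nq/2} (i.e., the Markov bound P[μ(bad set at scale 2^{-n}) ≥ 2^{-nq/2}] ≤ D 2^{-nq/2} holds). Then, almost surely, for every Δ > 0 there exists N ∈ ℕ such that μ({ t ∈ [0,T] : ν([t, min(t+r, T)]) ≥ r^{β+δ} for all r ∈ [0, 2^{-N}) }) ≥ μ([0,T]) − Δ. -/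

import Mathlib

open MeasureTheory ProbabilityTheory

theorem borel_cantelli_scale_interpolation {Ω : Type*} [MeasureSpace Ω]
    [IsProbabilityMeasure (ℙ : Measure Ω)]
    (T β δ : ℝ) (hT : 0 ≤ T) (hβ : 0 < β) (hδ : 0 < δ)
    (μ ν : Ω → Measure ℝ)
    (hfin : ∀ ω, μ ω (Set.Icc 0 T) < ⊤)
    (D q : ℝ) (hD : 0 < D) (hq : 0 < q)
    (hmarkov : ∀ n : ℕ,
      ℙ {ω | ENNReal.ofReal ((2:ℝ) ^ (-(n:ℝ) * q / 2)) ≤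
          μ ω {t ∈ Set.Icc 0 T |
            ν ω (Set.Icc t (min (t + (2:ℝ) ^ (-(n:ℝ))) T)) <
              ENNReal.ofReal ((2:ℝ) ^ (β + δ) * ((2:ℝ) ^ (-(n:ℝ))) ^ (β + δ))}}
        ≤ ENNReal.ofReal (D * (2:ℝ) ^ (-(n:ℝ) * q / 2))) :
    ∀ᵐ ω ∂(ℙ : Measure Ω), ∀ Δ : ℝ, 0 < Δ → ∃ N : ℕ,
      μ ω (Set.Icc 0 T) ≤
        μ ω {t ∈ Set.Icc 0 T | ∀ r : ℝ, 0 ≤ r → r < (2:ℝ) ^ (-(N:ℝ)) →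
            ENNReal.ofReal (r ^ (β + δ)) ≤ ν ω (Set.Icc t (min (t + r) T))}
          + ENNReal.ofReal Δ := by
  classical
  set c : ℝ := (2:ℝ) ^ (-(q/2) : ℝ) with hc
  have hc0 : 0 < c := Real.rpow_pos_of_pos (by norm_num) _
  have hc1 : c < 1 := by
    rw [hc]
    apply Real.rpow_lt_one_of_one_lt_of_neg (by norm_num)
    linarith
  have hpow : ∀ n : ℕ, (2:ℝ) ^ (-(n:ℝ) * q / 2) = c ^ n := by
    intro n
    rw [hc, ← Real.rpow_natCast ((2:ℝ) ^ (-(q/2) : ℝ)) n,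
      ← Real.rpow_mul (by norm_num)]
    ring_nf
  -- bad sets
  set bad : Ω → ℕ → Set ℝ := fun ω n =>
    {t ∈ Set.Icc 0 T |
      ν ω (Set.Icc t (min (t + (2:ℝ) ^ (-(n:ℝ))) T)) <
        ENNReal.ofReal ((2:ℝ) ^ (β + δ) * ((2:ℝ) ^ (-(n:ℝ))) ^ (β + δ))} with hbad
  set A : ℕ → Set Ω := fun n =>
    {ω | ENNReal.ofReal ((2:ℝ) ^ (-(n:ℝ) * q / 2)) ≤ μ ω (bad ω n)} with hA
  have hgeom : Summable (fun n : ℕ => c ^ n) :=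
    summable_geometric_of_lt_one hc0.le hc1
  have hDsum : Summable (fun n : ℕ => D * c ^ n) := hgeom.mul_left D
  have hsumA : (∑' n, ℙ (A n)) ≠ ⊤ := by
    apply ne_of_lt
    calc (∑' n, ℙ (A n)) ≤ ∑' n, ENNReal.ofReal (D * c ^ n) := by
          apply ENNReal.tsum_le_tsum
          intro n
          rw [← hpow n]
          exact hmarkov n
      _ = ENNReal.ofReal (∑' n, D * c ^ n) := by
          rw [ENNReal.ofReal_tsum_of_nonneg (fun n => by positivity) hDsum]
      _ < ⊤ := ENNReal.ofReal_lt_top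
  have hBC : ∀ᵐ ω ∂(ℙ : Measure Ω), ∀ᶠ n in Filter.atTop, ω ∉ A n :=
    MeasureTheory.ae_eventually_notMem hsumA
  filter_upwards [hBC] with ω hω Δ hΔ
  obtain ⟨M, hM⟩ := Filter.eventually_atTop.mp hω
  -- choose N with small tail and N ≥ M
  have htail : Filter.Tendsto (fun N : ℕ => c ^ (N + 1) * (1 - c)⁻¹)
      Filter.atTop (nhds 0) := by
    have h0 : Filter.Tendsto (fun N : ℕ => c ^ N) Filter.atTop (nhds 0) :=
      tendsto_pow_atTop_nhds_zero_of_lt_one hc0.le hc1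
    have := ((h0.comp (Filter.tendsto_add_atTop_nat 1)).mul_const (1 - c)⁻¹)
    simpa using this
  obtain ⟨N₀, hN₀⟩ := (Filter.eventually_atTop.mp
    ((htail.eventually_lt_const hΔ)))
  set N : ℕ := max M N₀ with hN
  refine ⟨N, ?_⟩
  -- the good set
  set G : Set ℝ := {t ∈ Set.Icc 0 T | ∀ r : ℝ, 0 ≤ r → r < (2:ℝ) ^ (-(N:ℝ)) →
      ENNReal.ofReal (r ^ (β + δ)) ≤ ν ω (Set.Icc t (min (t + r) T))} with hG
  -- inclusion
  have hincl : Set.Icc 0 T ⊆ G ∪ ⋃ k : ℕ, bad ω (N + 1 + k) := by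
    intro t ht
    by_cases hb : ∃ k : ℕ, t ∈ bad ω (N + 1 + k)
    · exact Or.inr (Set.mem_iUnion.mpr hb)
    push_neg at hb
    left
    refine ⟨ht, ?_⟩
    intro r hr0 hrN
    rcases eq_or_lt_of_le hr0 with hr | hr
    · rw [← hr, Real.zero_rpow (by positivity)]
      simp
    -- find n with 2^{-(n+1)} ≤ r < 2^{-n}, n ≥ N
    have hex : ∃ m : ℕ, (2:ℝ) ^ (-(m:ℝ)) ≤ r := by
      obtain ⟨m, hm⟩ := pow_unbounded_of_one_lt (R := ℝ) r⁻¹ (by norm_num : (1:ℝ) < 2)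
      refine ⟨m, ?_⟩
      rw [Real.rpow_neg (by norm_num), Real.rpow_natCast]
      rw [inv_le_comm₀ (by positivity) hr]
      exact hm.le
    have hmle : (2:ℝ) ^ (-(Nat.find hex:ℝ)) ≤ r := Nat.find_spec hex
    have hmN : N + 1 ≤ Nat.find hex := by
      by_contra hcon
      push_neg at hcon
      have : (2:ℝ) ^ (-(N:ℝ)) ≤ (2:ℝ) ^ (-(Nat.find hex:ℝ)) := by
        apply Real.rpow_le_rpow_left_iff (by norm_num : (1:ℝ) < 2) |>.mpr
        simp only [neg_le_neg_iff, Nat.cast_le]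
        exact_mod_cast Nat.lt_succ_iff.mp hcon
      linarith
    obtain ⟨n, hmn⟩ : ∃ n, Nat.find hex = n + 1 := ⟨Nat.find hex - 1, by omega⟩
    rw [hmn] at hmle
    have hnN : N ≤ n := by omega
    have hrn : r < (2:ℝ) ^ (-(n:ℝ)) := by
      by_contra hcon
      push_neg at hcon
      exact Nat.find_min hex (show n < Nat.find hex by omega) hcon
    -- t is not in bad (n+1)
    have hnb : t ∉ bad ω (n + 1) := by
      have := hb (n - N)
      have he : N + 1 + (n - N) = n + 1 := by omega
      rwa [he] at this
    have hnb' : ENNReal.ofReal ((2:ℝ) ^ (β + δ) * ((2:ℝ) ^ (-((n:ℝ)+1))) ^ (β + δ))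
        ≤ ν ω (Set.Icc t (min (t + (2:ℝ) ^ (-((n:ℝ)+1))) T)) := by
      rw [hbad] at hnb
      simp only [Set.mem_setOf_eq, not_and, not_lt] at hnb
      have := hnb ht
      have hcast : -(((n:ℕ)+1 : ℕ):ℝ) = -((n:ℝ)+1) := by push_cast; ring
      rwa [hcast] at this
    -- key comparison of exponents
    have hkey : r ^ (β + δ) ≤ (2:ℝ) ^ (β + δ) * ((2:ℝ) ^ (-((n:ℝ)+1))) ^ (β + δ) := by
      rw [← Real.mul_rpow (by norm_num) (by positivity)]
      have h2 : (2:ℝ) * (2:ℝ) ^ (-((n:ℝ)+1)) = (2:ℝ) ^ (-(n:ℝ)) := by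
        rw [show (-(n:ℝ)) = 1 + (-((n:ℝ)+1)) by ring,
          Real.rpow_add (by norm_num), Real.rpow_one]
      rw [h2]
      exact Real.rpow_le_rpow hr0 hrn.le (by positivity)
    have hsub : Set.Icc t (min (t + (2:ℝ) ^ (-((n:ℝ)+1))) T)
        ⊆ Set.Icc t (min (t + r) T) := by
      apply Set.Icc_subset_Icc_right
      apply min_le_min _ le_rfl
      have : (2:ℝ) ^ (-((n:ℝ)+1)) ≤ r := by
        have hcast : -(((n:ℕ)+1 : ℕ):ℝ) = -((n:ℝ)+1) := by push_cast; ring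
        rw [← hcast]; exact_mod_cast hmle
      linarith
    calc ENNReal.ofReal (r ^ (β + δ))
        ≤ ENNReal.ofReal ((2:ℝ) ^ (β + δ) * ((2:ℝ) ^ (-((n:ℝ)+1))) ^ (β + δ)) :=
          ENNReal.ofReal_le_ofReal hkey
      _ ≤ ν ω (Set.Icc t (min (t + (2:ℝ) ^ (-((n:ℝ)+1))) T)) := hnb'
      _ ≤ ν ω (Set.Icc t (min (t + r) T)) := measure_mono hsub
  -- now the measure estimate
  have hbadsum : μ ω (⋃ k : ℕ, bad ω (N + 1 + k)) ≤ ENNReal.ofReal Δ := by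
    calc μ ω (⋃ k : ℕ, bad ω (N + 1 + k))
        ≤ ∑' k : ℕ, μ ω (bad ω (N + 1 + k)) := measure_iUnion_le _
      _ ≤ ∑' k : ℕ, ENNReal.ofReal (c ^ (N + 1 + k)) := by
          apply ENNReal.tsum_le_tsum
          intro k
          have hk : ω ∉ A (N + 1 + k) := hM _ (by omega)
          rw [hA] at hk
          simp only [Set.mem_setOf_eq, not_le] at hk
          rw [hpow] at hk
          exact hk.le
      _ = ENNReal.ofReal (∑' k : ℕ, c ^ (N + 1 + k)) := by
          rw [ENNReal.ofReal_tsum_of_nonneg (fun k => by positivity)]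
          exact (summable_geometric_of_lt_one hc0.le hc1).comp_injective
            (add_right_injective (N + 1))
      _ ≤ ENNReal.ofReal Δ := by
          apply ENNReal.ofReal_le_ofReal
          have heq : (∑' k : ℕ, c ^ (N + 1 + k)) = c ^ (N + 1) * (1 - c)⁻¹ := by
            rw [← tsum_geometric_of_lt_one hc0.le hc1, ← tsum_mul_left]
            congr 1; ext k; rw [← pow_add]
          rw [heq]
          exact (hN₀ N (le_max_right _ _)).le
  calc μ ω (Set.Icc 0 T) ≤ μ ω (G ∪ ⋃ k : ℕ, bad ω (N + 1 + k)) :=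
        measure_mono hincl
    _ ≤ μ ω G + μ ω (⋃ k : ℕ, bad ω (N + 1 + k)) := measure_union_le _ _
    _ ≤ μ ω G + ENNReal.ofReal Δ := add_le_add le_rfl hbadsum
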